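/- There is an absolute constant c > 0 such that for every positive integer J and every vector b = (b_1,…,b_J) of non-negative integers with b_1 + … + b_J = J, one has Σ_{d ∈ D(b)} |𝓛*(d)| / (d_1 ⋯ d_J) ≥ c · (2 log 2)^J / ( Σ_{i=1}^J 2^{b_1 + … + b_i - i} ), where D(b) = ∏_{i=1}^J {2^{i-1}, 2^{i-1}+1, …, 2^i - 1}^{b_i} is the set of J-tuples d = (d_1,…,d_J) whose first b_1 coordinates lie in [1,1], next b_2 coordinates lie in [2,3], and in general whose coordinates indexed by positions b_1+…+b_{i-1}+1 through b_1+…+b_i lie in [2^{i-1}, 2^i - 1]. -/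

import Mathlib

open Finset Real


open scoped BigOperators

noncomputable section

/-- The set `D(b) = ∏_{i=1}^J {2^{i-1},…,2^i-1}^{b_i}`, with the tuple indexed as a
dependent function assigning, to each block `i` (0-indexed), `b i` coordinates lying in
`[2^i, 2^{i+1}-1]`. -/
def Dset (J : ℕ) (b : Fin J → ℕ) : Finset ((i : Fin J) → Fin (b i) → ℕ) :=
  Fintype.piFinset fun i : Fin J =>
    Fintype.piFinset fun _ : Fin (b i) =>
      Finset.Icc (2 ^ (i : ℕ)) (2 ^ ((i : ℕ) + 1) - 1)

/-- The set `𝓛*(d)` of subset sums of the (J-coordinate) tuple `d`. -/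
def LstarD (J : ℕ) (b : Fin J → ℕ) (d : (i : Fin J) → Fin (b i) → ℕ) : Finset ℕ :=
  (Finset.univ : Finset (Finset ((i : Fin J) × Fin (b i)))).image fun I =>
    ∑ p ∈ I, d p.1 p.2


noncomputable def Hb (i : ℕ) : ℝ := ∑ x ∈ Finset.Icc (2^i : ℕ) (2^(i+1)-1), (x:ℝ)⁻¹

lemma Icc_card (i : ℕ) : (Finset.Icc (2^i : ℕ) (2^(i+1)-1)).card = 2^i := by
  rw [Nat.card_Icc]
  have : (2:ℕ)^(i+1) = 2^i + 2^i := by ring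
  have h1 : (1:ℕ) ≤ 2^i := Nat.one_le_two_pow
  omega

lemma Hb_le_one (i : ℕ) : Hb i ≤ 1 := by
  have h1 : ∀ x ∈ Finset.Icc (2^i : ℕ) (2^(i+1)-1), (x:ℝ)⁻¹ ≤ ((2:ℝ)^i)⁻¹ := by
    intro x hx
    rw [Finset.mem_Icc] at hx
    have : (2:ℝ)^i ≤ (x:ℝ) := by exact_mod_cast hx.1
    exact inv_anti₀ (by positivity) this
  calc Hb i ≤ ∑ _x ∈ Finset.Icc (2^i : ℕ) (2^(i+1)-1), ((2:ℝ)^i)⁻¹ := Finset.sum_le_sum h1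
    _ = ((2:ℝ)^i) * ((2:ℝ)^i)⁻¹ := by
        rw [Finset.sum_const, nsmul_eq_mul, Icc_card]; push_cast; ring
    _ = 1 := mul_inv_cancel₀ (by positivity)

lemma log_two_le_Hb (i : ℕ) : Real.log 2 ≤ Hb i := by
  have key : ∀ x : ℕ, 0 < x → Real.log ((x:ℝ)+1) - Real.log x ≤ (x:ℝ)⁻¹ := by
    intro x hx
    have hx' : (0:ℝ) < x := by exact_mod_cast hx
    rw [← Real.log_div (by positivity) (by positivity)]
    calc Real.log (((x:ℝ)+1)/x) ≤ ((x:ℝ)+1)/x - 1 :=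
          Real.log_le_sub_one_of_pos (by positivity)
      _ = (x:ℝ)⁻¹ := by field_simp; ring
  have tele : ∑ j ∈ Finset.range (2^i), ((fun k => Real.log ((2^i + k : ℕ) : ℝ)) (j+1) - (fun k => Real.log ((2^i + k : ℕ) : ℝ)) j) = Real.log 2 := by
    rw [Finset.sum_range_sub (fun k => Real.log ((2^i + k : ℕ) : ℝ))]
    have h2 : ((2^i + 2^i : ℕ) : ℝ) = 2 * ((2^i : ℕ) : ℝ) := by push_cast; ring
    rw [h2, Real.log_mul (by norm_num) (by positivity), add_zero]
    simp
  have hIcc : Hb i = ∑ j ∈ Finset.range (2^i), ((2^i + j : ℕ) : ℝ)⁻¹ := by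
    unfold Hb
    rw [← Finset.Ico_add_one_right_eq_Icc, Finset.sum_Ico_eq_sum_range,
      show 2^(i+1)-1+1-2^i = 2^i by
        have h1 : (1:ℕ) ≤ 2^i := Nat.one_le_two_pow
        have h2 : (2:ℕ)^(i+1) = 2^i + 2^i := by ring
        omega]
  rw [hIcc, ← tele]
  apply Finset.sum_le_sum
  intro j _
  simp only
  have hp : 0 < 2^i + j := by positivity
  have := key (2^i + j) hp
  calc Real.log ((2^i + (j+1) : ℕ) : ℝ) - Real.log ((2^i + j : ℕ) : ℝ)
      = Real.log (((2^i + j : ℕ) : ℝ) + 1) - Real.log ((2^i + j : ℕ) : ℝ) := by push_cast; ring_nf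
    _ ≤ ((2^i + j : ℕ):ℝ)⁻¹ := this

lemma Hb_pos (i : ℕ) : 0 < Hb i := lt_of_lt_of_le (Real.log_pos (by norm_num)) (log_two_le_Hb i)


abbrev Idx (J : ℕ) (b : Fin J → ℕ) := (i : Fin J) × Fin (b i)

def Blo {J : ℕ} {b : Fin J → ℕ} (p : Idx J b) : Finset ℕ :=
  Finset.Icc (2 ^ (p.1:ℕ)) (2 ^ ((p.1:ℕ)+1) - 1)

def Dp (J : ℕ) (b : Fin J → ℕ) : Finset (Idx J b → ℕ) := Fintype.piFinset fun p => Blo p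

noncomputable def wt {J : ℕ} {b : Fin J → ℕ} (f : Idx J b → ℕ) : ℝ := ∏ p, ((f p : ℝ))⁻¹

def Lst {J : ℕ} {b : Fin J → ℕ} (f : Idx J b → ℕ) : Finset ℕ :=
  Finset.image (fun I => ∑ p ∈ I, f p) Finset.univ

def Nn {J : ℕ} {b : Fin J → ℕ} (f : Idx J b → ℕ) (s : ℕ) : ℕ :=
  ((Finset.univ : Finset (Finset (Idx J b))).filter (fun I => ∑ p ∈ I, f p = s)).card

def Rr {J : ℕ} {b : Fin J → ℕ} (f : Idx J b → ℕ) : ℕ :=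
  ((Finset.univ : Finset (Finset (Idx J b) × Finset (Idx J b))).filter
    (fun q => ∑ p ∈ q.1, f p = ∑ p ∈ q.2, f p)).card

variable {J : ℕ} {b : Fin J → ℕ}

lemma card_Idx : Fintype.card (Idx J b) = ∑ i, b i := by simp

lemma mem_Dp {f : Idx J b → ℕ} : f ∈ Dp J b ↔ ∀ p, f p ∈ Blo p := Fintype.mem_piFinset

lemma Dp_lb {f : Idx J b → ℕ} (hf : f ∈ Dp J b) (p : Idx J b) : 2 ^ (p.1:ℕ) ≤ f p :=
  (Finset.mem_Icc.1 (mem_Dp.1 hf p)).1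

lemma Dp_one_le {f : Idx J b → ℕ} (hf : f ∈ Dp J b) (p : Idx J b) : 1 ≤ f p :=
  le_trans Nat.one_le_two_pow (Dp_lb hf p)

lemma wt_nonneg (f : Idx J b → ℕ) : 0 ≤ wt f := Finset.prod_nonneg fun p _ => by positivity

lemma sum_wt : ∑ f ∈ Dp J b, wt f = ∏ p : Idx J b, Hb (p.1:ℕ) := by
  rw [Dp]
  rw [show (fun f : Idx J b → ℕ => wt f) = fun f => ∏ p : Idx J b, ((f p : ℝ))⁻¹ from rfl]
  rw [← Finset.prod_univ_sum (fun p => Blo p) (fun p x => ((x:ℕ):ℝ)⁻¹)]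
  rfl

lemma sum_N_eq (f : Idx J b → ℕ) : ∑ s ∈ Lst f, Nn f s = 2 ^ Fintype.card (Idx J b) := by
  have := Finset.card_eq_sum_card_fiberwise
    (f := fun I : Finset (Idx J b) => ∑ p ∈ I, f p) (s := Finset.univ) (t := Lst f)
    (fun I _ => Finset.mem_image_of_mem _ (Finset.mem_univ I))
  rw [Finset.card_univ, Fintype.card_finset] at this
  exact this.symm

lemma sum_Nsq_eq (f : Idx J b → ℕ) : ∑ s ∈ Lst f, (Nn f s)^2 = Rr f := by
  have := Finset.card_eq_sum_card_fiberwise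
    (f := fun q : Finset (Idx J b) × Finset (Idx J b) => ∑ p ∈ q.1, f p)
    (s := Finset.univ.filter (fun q => ∑ p ∈ q.1, f p = ∑ p ∈ q.2, f p)) (t := Lst f)
    (fun q _ => Finset.mem_image_of_mem _ (Finset.mem_univ q.1))
  rw [Rr, this]
  apply Finset.sum_congr rfl
  intro s _
  rw [Finset.filter_filter]
  have hset : (Finset.univ.filter fun q : Finset (Idx J b) × Finset (Idx J b) =>
      (∑ p ∈ q.1, f p = ∑ p ∈ q.2, f p) ∧ ∑ p ∈ q.1, f p = s)
      = (Finset.univ.filter fun I : Finset (Idx J b) => ∑ p ∈ I, f p = s) ×ˢ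
        (Finset.univ.filter fun I : Finset (Idx J b) => ∑ p ∈ I, f p = s) := by
    ext q
    simp only [Finset.mem_filter, Finset.mem_univ, true_and, Finset.mem_product]
    constructor
    · rintro ⟨h1, h2⟩; exact ⟨h2, h1 ▸ h2⟩
    · rintro ⟨h1, h2⟩; exact ⟨h1.trans h2.symm, h1⟩
  rw [hset, Finset.card_product]
  rw [Nn, sq]

lemma cs_ineq :
    (∑ f ∈ Dp J b, wt f * (2 ^ Fintype.card (Idx J b) : ℝ))^2 ≤
      (∑ f ∈ Dp J b, wt f * ((Lst f).card : ℝ)) *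
        (∑ f ∈ Dp J b, wt f * (Rr f : ℝ)) := by
  have key := Finset.sum_mul_sq_le_sq_mul_sq ((Dp J b).sigma (fun f => Lst f))
    (fun x => Real.sqrt (wt x.1)) (fun x => Real.sqrt (wt x.1) * (Nn x.1 x.2 : ℝ))
  have e1 : ∑ x ∈ (Dp J b).sigma (fun f => Lst f),
      Real.sqrt (wt x.1) * (Real.sqrt (wt x.1) * (Nn x.1 x.2 : ℝ))
      = ∑ f ∈ Dp J b, wt f * (2 ^ Fintype.card (Idx J b) : ℝ) := by
    rw [Finset.sum_sigma]
    apply Finset.sum_congr rfl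
    intro f _
    have : ∀ s ∈ Lst f, Real.sqrt (wt f) * (Real.sqrt (wt f) * (Nn f s : ℝ))
        = wt f * (Nn f s : ℝ) := by
      intro s _
      rw [← mul_assoc, Real.mul_self_sqrt (wt_nonneg f)]
    rw [Finset.sum_congr rfl this, ← Finset.mul_sum, ← Nat.cast_sum, sum_N_eq]
    push_cast
    ring
  have e2 : ∑ x ∈ (Dp J b).sigma (fun f => Lst f), Real.sqrt (wt x.1) ^ 2
      = ∑ f ∈ Dp J b, wt f * ((Lst f).card : ℝ) := by
    rw [Finset.sum_sigma]
    apply Finset.sum_congr rfl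
    intro f _
    simp only [Real.sq_sqrt (wt_nonneg f)]
    rw [Finset.sum_const, nsmul_eq_mul, mul_comm]
  have e3 : ∑ x ∈ (Dp J b).sigma (fun f => Lst f),
      (Real.sqrt (wt x.1) * (Nn x.1 x.2 : ℝ)) ^ 2
      = ∑ f ∈ Dp J b, wt f * (Rr f : ℝ) := by
    rw [Finset.sum_sigma]
    apply Finset.sum_congr rfl
    intro f _
    have : ∀ s ∈ Lst f, (Real.sqrt (wt f) * (Nn f s : ℝ))^2 = wt f * ((Nn f s : ℝ))^2 := by
      intro s _
      rw [mul_pow, Real.sq_sqrt (wt_nonneg f)]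
    rw [Finset.sum_congr rfl this, ← Finset.mul_sum]
    congr 1
    rw [← sum_Nsq_eq]
    push_cast
    rfl
  rw [e1, e2, e3] at key
  exact key

set_option maxHeartbeats 1000000 in
lemma pair_bound_core (A B : Finset (Idx J b)) (hd : Disjoint A B) (q : Idx J b)
    (hqA : q ∈ A) :
    ∑ f ∈ (Dp J b).filter (fun f => ∑ p ∈ A, f p = ∑ p ∈ B, f p), wt f
      ≤ ((2:ℝ)^((q.1:ℕ)))⁻¹ * ∏ p ∈ Finset.univ.erase q, Hb (p.1:ℕ) := by
  classical
  set F := (Dp J b).filter (fun f => ∑ p ∈ A, f p = ∑ p ∈ B, f p) with hF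
  have hFD : ∀ f ∈ F, f ∈ Dp J b := fun f hf => (Finset.mem_filter.1 hf).1
  -- step 1 : pointwise bound on wt
  have step1 : ∀ f ∈ F, wt f ≤ ((2:ℝ)^((q.1:ℕ)))⁻¹ * ∏ p ∈ Finset.univ.erase q, ((f p : ℝ))⁻¹ := by
    intro f hf
    have hw : wt f = ((f q : ℝ))⁻¹ * ∏ p ∈ Finset.univ.erase q, ((f p : ℝ))⁻¹ :=
      (Finset.mul_prod_erase Finset.univ _ (Finset.mem_univ q)).symm
    rw [hw]
    apply mul_le_mul_of_nonneg_right
    · apply inv_anti₀ (by positivity)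
      exact_mod_cast Dp_lb (hFD f hf) q
    · exact Finset.prod_nonneg fun p _ => by positivity
  -- step 2 : sum bound via injection
  have step2 : ∑ f ∈ F, ∏ p ∈ Finset.univ.erase q, ((f p : ℝ))⁻¹
      ≤ ∏ p ∈ Finset.univ.erase q, Hb (p.1:ℕ) := by
    set D2 : Finset (Idx J b → ℕ) := Fintype.piFinset
      (fun p => if p = q then {2^((q.1:ℕ))} else Blo p) with hD2
    set j : (Idx J b → ℕ) → (Idx J b → ℕ) := fun f => Function.update f q (2^((q.1:ℕ))) with hj
    have hinj : Set.InjOn j F := by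
      intro f hf f' hf' hEq
      have hoff : ∀ p, p ≠ q → f p = f' p := by
        intro p hp
        have h := congrFun hEq p
        simp only [hj, Function.update_of_ne hp] at h
        exact h
      have hcond := (Finset.mem_filter.1 hf).2
      have hcond' := (Finset.mem_filter.1 hf').2
      have hqB : q ∉ B := fun h => (Finset.disjoint_left.1 hd hqA) h
      have hsA : ∑ p ∈ A.erase q, f p = ∑ p ∈ A.erase q, f' p :=
        Finset.sum_congr rfl fun p hp => hoff p (Finset.mem_erase.1 hp).1
      have hsB : ∑ p ∈ B, f p = ∑ p ∈ B, f' p :=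
        Finset.sum_congr rfl fun p hp => hoff p (fun h => hqB (h ▸ hp))
      have h1 : f q + ∑ p ∈ A.erase q, f p = ∑ p ∈ B, f p := by
        rw [Finset.add_sum_erase A f hqA]; exact hcond
      have h2 : f' q + ∑ p ∈ A.erase q, f' p = ∑ p ∈ B, f' p := by
        rw [Finset.add_sum_erase A f' hqA]; exact hcond'
      have : f q = f' q := by omega
      funext p
      by_cases hp : p = q
      · rw [hp]; exact this
      · exact hoff p hp
    have himg : ∀ f ∈ F, j f ∈ D2 := by
      intro f hf
      rw [hD2, Fintype.mem_piFinset]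
      intro p
      by_cases hp : p = q
      · subst hp; simp [hj]
      · rw [if_neg hp]
        simp only [hj, Function.update_of_ne hp]
        exact mem_Dp.1 (hFD f hf) p
    have hval : ∀ f ∈ F, ∏ p ∈ Finset.univ.erase q, ((f p : ℝ))⁻¹
        = ∏ p ∈ Finset.univ.erase q, (((j f) p : ℝ))⁻¹ := by
      intro f hf
      apply Finset.prod_congr rfl
      intro p hp
      simp only [hj, Function.update_of_ne (Finset.mem_erase.1 hp).1]
    set g : (Idx J b → ℕ) → ℝ := fun y => ∏ p ∈ Finset.univ.erase q, ((y p : ℝ))⁻¹ with hg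
    have himage : ∑ y ∈ F.image j, g y = ∑ f ∈ F, g (j f) :=
      Finset.sum_image (fun f hf f' hf' h => hinj hf hf' h)
    calc ∑ f ∈ F, ∏ p ∈ Finset.univ.erase q, ((f p : ℝ))⁻¹
        = ∑ f ∈ F, g (j f) := Finset.sum_congr rfl hval
      _ = ∑ y ∈ F.image j, g y := himage.symm
      _ ≤ ∑ y ∈ D2, g y := by
          apply Finset.sum_le_sum_of_subset_of_nonneg
          · intro y hy
            obtain ⟨f, hf, rfl⟩ := Finset.mem_image.1 hy
            exact himg f hf
          · intro y _ _
            exact Finset.prod_nonneg fun p _ => by positivity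
      _ = ∏ p ∈ Finset.univ.erase q, Hb (p.1:ℕ) := by
          have expand : ∀ y : Idx J b → ℕ,
              ∏ p ∈ Finset.univ.erase q, ((y p : ℝ))⁻¹
              = ∏ p : Idx J b, (if p = q then 1 else ((y p : ℝ))⁻¹) := by
            intro y
            rw [← Finset.mul_prod_erase Finset.univ _ (Finset.mem_univ q), if_pos rfl, one_mul]
            apply Finset.prod_congr rfl
            intro p hp
            rw [if_neg (Finset.mem_erase.1 hp).1]
          rw [Finset.sum_congr rfl (fun y _ => expand y), hD2,
            ← Finset.prod_univ_sum _ (fun p (x:ℕ) => if p = q then (1:ℝ) else ((x:ℝ))⁻¹)]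
          rw [← Finset.mul_prod_erase Finset.univ _ (Finset.mem_univ q)]
          have hq1 : (∑ x ∈ (if (q:Idx J b) = q then ({2^((q.1:ℕ))} : Finset ℕ) else Blo q),
              if (q:Idx J b) = q then (1:ℝ) else ((x:ℝ))⁻¹) = 1 := by
            rw [if_pos rfl]
            simp
          rw [hq1, one_mul]
          apply Finset.prod_congr rfl
          intro p hp
          have hpq := (Finset.mem_erase.1 hp).1
          rw [if_neg hpq, Finset.sum_congr rfl (fun x _ => if_neg hpq)]
          rfl
  calc ∑ f ∈ F, wt f ≤ ∑ f ∈ F, ((2:ℝ)^((q.1:ℕ)))⁻¹ * ∏ p ∈ Finset.univ.erase q, ((f p : ℝ))⁻¹ :=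
        Finset.sum_le_sum step1
    _ = ((2:ℝ)^((q.1:ℕ)))⁻¹ * ∑ f ∈ F, ∏ p ∈ Finset.univ.erase q, ((f p : ℝ))⁻¹ := by
        rw [Finset.mul_sum]
    _ ≤ ((2:ℝ)^((q.1:ℕ)))⁻¹ * ∏ p ∈ Finset.univ.erase q, Hb (p.1:ℕ) := by
        apply mul_le_mul_of_nonneg_left step2 (by positivity)

def mC {J : ℕ} {b : Fin J → ℕ} (C : Finset (Idx J b)) : ℕ := C.sup (fun p => (p.1:ℕ))

lemma prod_Hb_pos : 0 < ∏ p : Idx J b, Hb (p.1:ℕ) :=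
  Finset.prod_pos fun p _ => Hb_pos _

lemma pair_bound (I I' : Finset (Idx J b)) (hne : I ≠ I') :
    ∑ f ∈ (Dp J b).filter (fun f => ∑ p ∈ I, f p = ∑ p ∈ I', f p), wt f
      ≤ (∏ p : Idx J b, Hb (p.1:ℕ)) / Real.log 2 *
          ((2:ℝ)^(mC ((I \ I') ∪ (I' \ I))))⁻¹ := by
  classical
  set A := I \ I' with hA
  set B := I' \ I with hB
  have hcond : ∀ f : Idx J b → ℕ,
      (∑ p ∈ I, f p = ∑ p ∈ I', f p) ↔ (∑ p ∈ A, f p = ∑ p ∈ B, f p) := by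
    intro f
    have h1 : ∑ p ∈ I ∩ I', f p + ∑ p ∈ I \ I', f p = ∑ p ∈ I, f p :=
      Finset.sum_inter_add_sum_sdiff I I' f
    have h2 : ∑ p ∈ I ∩ I', f p + ∑ p ∈ I' \ I, f p = ∑ p ∈ I', f p := by
      rw [Finset.inter_comm]
      exact Finset.sum_inter_add_sum_sdiff I' I f
    rw [hA, hB]
    omega
  rw [Finset.filter_congr (fun f _ => by rw [hcond f])]
  have hABne : ¬(A = ∅ ∧ B = ∅) := by
    rintro ⟨h1, h2⟩
    apply hne
    apply Finset.Subset.antisymm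
    · rw [← Finset.sdiff_eq_empty_iff_subset]; exact h1
    · rw [← Finset.sdiff_eq_empty_iff_subset]; exact h2
  have hrhs_nonneg : 0 ≤ (∏ p : Idx J b, Hb (p.1:ℕ)) / Real.log 2 *
      ((2:ℝ)^(mC (A ∪ B)))⁻¹ := by
    apply mul_nonneg
    · exact div_nonneg (le_of_lt prod_Hb_pos) (le_of_lt (Real.log_pos (by norm_num)))
    · positivity
  by_cases hAe : A = ∅
  · -- then B nonempty, condition impossible
    have hBne : B.Nonempty := Finset.nonempty_of_ne_empty (fun h => hABne ⟨hAe, h⟩)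
    have : (Dp J b).filter (fun f => ∑ p ∈ A, f p = ∑ p ∈ B, f p) = ∅ := by
      apply Finset.filter_false_of_mem
      intro f hf h
      rw [hAe, Finset.sum_empty] at h
      have : 0 < ∑ p ∈ B, f p :=
        Finset.sum_pos (fun p hp => Dp_one_le hf p) hBne
      omega
    rw [this, Finset.sum_empty]
    exact hrhs_nonneg
  · by_cases hBe : B = ∅
    · have hAne : A.Nonempty := Finset.nonempty_of_ne_empty hAe
      have : (Dp J b).filter (fun f => ∑ p ∈ A, f p = ∑ p ∈ B, f p) = ∅ := by
        apply Finset.filter_false_of_mem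
        intro f hf h
        rw [hBe, Finset.sum_empty] at h
        have : 0 < ∑ p ∈ A, f p :=
          Finset.sum_pos (fun p hp => Dp_one_le hf p) (Finset.nonempty_of_ne_empty hAe)
        omega
      rw [this, Finset.sum_empty]
      exact hrhs_nonneg
    · -- both nonempty
      have hCne : (A ∪ B).Nonempty := by
        rw [Finset.nonempty_iff_ne_empty]
        intro h
        rw [Finset.union_eq_empty] at h
        exact hABne h
      obtain ⟨q, hqC, hq⟩ := Finset.exists_mem_eq_sup (A ∪ B) hCne (fun p => (p.1:ℕ))
      have hdisj : Disjoint A B := disjoint_sdiff_sdiff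
      have key : ∑ f ∈ (Dp J b).filter (fun f => ∑ p ∈ A, f p = ∑ p ∈ B, f p), wt f
          ≤ ((2:ℝ)^((q.1:ℕ)))⁻¹ * ∏ p ∈ Finset.univ.erase q, Hb (p.1:ℕ) := by
        rcases Finset.mem_union.1 hqC with hqA | hqB
        · exact pair_bound_core A B hdisj q hqA
        · have := pair_bound_core B A hdisj.symm q hqB
          rw [Finset.filter_congr (fun f _ => by rw [eq_comm])] at this
          exact this
      have herase : ∏ p ∈ Finset.univ.erase q, Hb (p.1:ℕ)
          = (∏ p : Idx J b, Hb (p.1:ℕ)) / Hb (q.1:ℕ) := by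
        rw [eq_div_iff (ne_of_gt (Hb_pos _)), mul_comm]
        exact Finset.mul_prod_erase Finset.univ (fun p => Hb ((p.1:ℕ))) (Finset.mem_univ q)
      calc ∑ f ∈ (Dp J b).filter (fun f => ∑ p ∈ A, f p = ∑ p ∈ B, f p), wt f
          ≤ ((2:ℝ)^((q.1:ℕ)))⁻¹ * ∏ p ∈ Finset.univ.erase q, Hb (p.1:ℕ) := key
        _ ≤ ((2:ℝ)^(mC (A ∪ B)))⁻¹ * ((∏ p : Idx J b, Hb (p.1:ℕ)) / Real.log 2) := by
            rw [herase, ← hq]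
            apply mul_le_mul_of_nonneg_left _ (by positivity)
            apply div_le_div_of_nonneg_left (le_of_lt prod_Hb_pos) (Real.log_pos (by norm_num))
            exact log_two_le_Hb _
        _ = (∏ p : Idx J b, Hb (p.1:ℕ)) / Real.log 2 * ((2:ℝ)^(mC (A ∪ B)))⁻¹ := by ring

lemma E_eq : ∑ f ∈ Dp J b, wt f * (Rr f : ℝ)
    = ∑ I : Finset (Idx J b), ∑ I' : Finset (Idx J b),
        ∑ f ∈ (Dp J b).filter (fun f => ∑ p ∈ I, f p = ∑ p ∈ I', f p), wt f := by
  classical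
  have step : ∀ f : Idx J b → ℕ, wt f * (Rr f : ℝ)
      = ∑ qq : Finset (Idx J b) × Finset (Idx J b),
          (if ∑ p ∈ qq.1, f p = ∑ p ∈ qq.2, f p then wt f else 0) := by
    intro f
    rw [Rr, Finset.card_filter]
    push_cast
    rw [Finset.mul_sum]
    apply Finset.sum_congr rfl
    intro qq _
    by_cases h : ∑ p ∈ qq.1, f p = ∑ p ∈ qq.2, f p <;> simp [h]
  rw [Finset.sum_congr rfl (fun f _ => step f), Finset.sum_comm]
  rw [Fintype.sum_prod_type]
  apply Finset.sum_congr rfl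
  intro I _
  apply Finset.sum_congr rfl
  intro I' _
  rw [Finset.sum_filter]

lemma diag_bound (I : Finset (Idx J b)) :
    ∑ f ∈ (Dp J b).filter (fun f => ∑ p ∈ I, f p = ∑ p ∈ I, f p), wt f
      ≤ ∏ p : Idx J b, Hb (p.1:ℕ) := by
  rw [← sum_wt]
  apply Finset.sum_le_sum_of_subset_of_nonneg (Finset.filter_subset _ _)
  intro f _ _
  exact wt_nonneg f

lemma sum_over_pairs :
    ∑ f ∈ Dp J b, wt f * (Rr f : ℝ)
      ≤ 2^(Fintype.card (Idx J b)) * ((∏ p : Idx J b, Hb (p.1:ℕ)) +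
          ∑ C : Finset (Idx J b),
            (∏ p : Idx J b, Hb (p.1:ℕ)) / Real.log 2 * ((2:ℝ)^(mC C))⁻¹) := by
  classical
  rw [E_eq]
  have hg : ∀ C : Finset (Idx J b),
      0 ≤ (∏ p : Idx J b, Hb (p.1:ℕ)) / Real.log 2 * ((2:ℝ)^(mC C))⁻¹ := by
    intro C
    apply mul_nonneg
    · exact div_nonneg (le_of_lt prod_Hb_pos) (le_of_lt (Real.log_pos (by norm_num)))
    · positivity
  have inner : ∀ I : Finset (Idx J b),
      ∑ I' : Finset (Idx J b),
        ∑ f ∈ (Dp J b).filter (fun f => ∑ p ∈ I, f p = ∑ p ∈ I', f p), wt f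
      ≤ (∏ p : Idx J b, Hb (p.1:ℕ)) +
          ∑ C : Finset (Idx J b),
            (∏ p : Idx J b, Hb (p.1:ℕ)) / Real.log 2 * ((2:ℝ)^(mC C))⁻¹ := by
    intro I
    have pt : ∀ I' : Finset (Idx J b),
        ∑ f ∈ (Dp J b).filter (fun f => ∑ p ∈ I, f p = ∑ p ∈ I', f p), wt f
        ≤ (if I' = I then (∏ p : Idx J b, Hb (p.1:ℕ)) else 0)
            + (∏ p : Idx J b, Hb (p.1:ℕ)) / Real.log 2 * ((2:ℝ)^(mC ((I \ I') ∪ (I' \ I))))⁻¹ := by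
      intro I'
      by_cases h : I' = I
      · subst h
        rw [if_pos rfl]
        exact le_add_of_le_of_nonneg (diag_bound I') (hg _)
      · rw [if_neg h, zero_add]
        exact pair_bound I I' (fun hh => h hh.symm)
    calc ∑ I' : Finset (Idx J b),
        ∑ f ∈ (Dp J b).filter (fun f => ∑ p ∈ I, f p = ∑ p ∈ I', f p), wt f
        ≤ ∑ I' : Finset (Idx J b), ((if I' = I then (∏ p : Idx J b, Hb (p.1:ℕ)) else 0)
            + (∏ p : Idx J b, Hb (p.1:ℕ)) / Real.log 2 * ((2:ℝ)^(mC ((I \ I') ∪ (I' \ I))))⁻¹) :=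
          Finset.sum_le_sum (fun I' _ => pt I')
      _ = (∏ p : Idx J b, Hb (p.1:ℕ)) +
            ∑ I' : Finset (Idx J b),
              (∏ p : Idx J b, Hb (p.1:ℕ)) / Real.log 2 * ((2:ℝ)^(mC ((I \ I') ∪ (I' \ I))))⁻¹ := by
          rw [Finset.sum_add_distrib, Finset.sum_ite_eq' Finset.univ I]
          simp
      _ = (∏ p : Idx J b, Hb (p.1:ℕ)) +
            ∑ C : Finset (Idx J b),
              (∏ p : Idx J b, Hb (p.1:ℕ)) / Real.log 2 * ((2:ℝ)^(mC C))⁻¹ := by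
          congr 1
          apply Finset.sum_nbij' (i := fun I' => (I \ I') ∪ (I' \ I))
            (j := fun C => (I \ C) ∪ (C \ I))
          · intro I' _; exact Finset.mem_univ _
          · intro C _; exact Finset.mem_univ _
          · intro I' _
            ext p
            simp only [Finset.mem_union, Finset.mem_sdiff]
            by_cases h1 : p ∈ I <;> by_cases h2 : p ∈ I' <;> simp [h1, h2]
          · intro C _
            ext p
            simp only [Finset.mem_union, Finset.mem_sdiff]
            by_cases h1 : p ∈ I <;> by_cases h2 : p ∈ C <;> simp [h1, h2]
          · intro I' _
            rfl
  calc ∑ I : Finset (Idx J b), ∑ I' : Finset (Idx J b),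
        ∑ f ∈ (Dp J b).filter (fun f => ∑ p ∈ I, f p = ∑ p ∈ I', f p), wt f
      ≤ ∑ _I : Finset (Idx J b), ((∏ p : Idx J b, Hb (p.1:ℕ)) +
          ∑ C : Finset (Idx J b),
            (∏ p : Idx J b, Hb (p.1:ℕ)) / Real.log 2 * ((2:ℝ)^(mC C))⁻¹) :=
        Finset.sum_le_sum (fun I _ => inner I)
    _ = 2^(Fintype.card (Idx J b)) * ((∏ p : Idx J b, Hb (p.1:ℕ)) +
          ∑ C : Finset (Idx J b),
            (∏ p : Idx J b, Hb (p.1:ℕ)) / Real.log 2 * ((2:ℝ)^(mC C))⁻¹) := by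
        rw [Finset.sum_const, Finset.card_univ, Fintype.card_finset, nsmul_eq_mul]
        push_cast
        ring

lemma beta_eq (i : Fin J) :
    (Finset.univ.filter fun p : Idx J b => (p.1:ℕ) ≤ (i:ℕ)).card
      = ∑ j ∈ Finset.univ.filter (fun j : Fin J => j ≤ i), b j := by
  classical
  have hset : (Finset.univ.filter fun p : Idx J b => (p.1:ℕ) ≤ (i:ℕ))
      = Finset.univ.sigma (fun j : Fin J =>
          if (j:ℕ) ≤ (i:ℕ) then (Finset.univ : Finset (Fin (b j))) else ∅) := by
    ext p
    simp only [Finset.mem_filter, Finset.mem_univ, true_and, Finset.mem_sigma]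
    by_cases h : (p.1:ℕ) ≤ (i:ℕ) <;> simp [h]
  rw [hset, Finset.card_sigma]
  rw [Finset.sum_filter]
  apply Finset.sum_congr rfl
  intro j _
  by_cases h : (j:ℕ) ≤ (i:ℕ)
  · rw [if_pos h, if_pos (by exact Fin.le_def.2 h)]
    simp
  · rw [if_neg h, if_neg (fun hh => h (Fin.le_def.1 hh))]
    simp

lemma mC_lt (hJ : 0 < J) (C : Finset (Idx J b)) : mC C < J := by
  rw [mC]
  apply Finset.sup_lt_iff (by exact hJ) |>.2
  intro p _
  exact p.1.2

lemma sum_inv_mC (hJ : 0 < J) :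
    ∑ C : Finset (Idx J b), ((2:ℝ)^(mC C))⁻¹
      ≤ 1 + ∑ i : Fin J,
          (2:ℝ)^((Finset.univ.filter fun p : Idx J b => (p.1:ℕ) ≤ (i:ℕ)).card)
            * ((2:ℝ)^(i:ℕ))⁻¹ := by
  classical
  have hsplit : ∑ C : Finset (Idx J b), ((2:ℝ)^(mC C))⁻¹
      = ((2:ℝ)^(mC (∅ : Finset (Idx J b))))⁻¹
        + ∑ C ∈ Finset.univ.erase (∅ : Finset (Idx J b)), ((2:ℝ)^(mC C))⁻¹ :=
    (Finset.add_sum_erase _ _ (Finset.mem_univ ∅)).symm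
  have hempty : ((2:ℝ)^(mC (∅ : Finset (Idx J b))))⁻¹ = 1 := by
    rw [mC, Finset.sup_empty]
    norm_num
  rw [hsplit, hempty]
  apply add_le_add_right
  set μ : Finset (Idx J b) → Fin J := fun C => ⟨mC C, mC_lt hJ C⟩ with hμ
  rw [← Finset.sum_fiberwise_of_maps_to (g := μ) (t := Finset.univ)
    (fun C _ => Finset.mem_univ _) (fun C => ((2:ℝ)^(mC C))⁻¹)]
  apply Finset.sum_le_sum
  intro i _
  have hterm : ∀ C ∈ (Finset.univ.erase (∅ : Finset (Idx J b))).filter (fun C => μ C = i),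
      ((2:ℝ)^(mC C))⁻¹ = ((2:ℝ)^(i:ℕ))⁻¹ := by
    intro C hC
    have := (Finset.mem_filter.1 hC).2
    rw [hμ] at this
    have : mC C = (i:ℕ) := by
      have h2 := congrArg Fin.val this
      exact h2
    rw [this]
  rw [Finset.sum_congr rfl hterm, Finset.sum_const, nsmul_eq_mul]
  apply mul_le_mul_of_nonneg_right _ (by positivity)
  have hsub : (Finset.univ.erase (∅ : Finset (Idx J b))).filter (fun C => μ C = i)
      ⊆ (Finset.univ.filter fun p : Idx J b => (p.1:ℕ) ≤ (i:ℕ)).powerset := by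
    intro C hC
    rw [Finset.mem_powerset]
    intro p hp
    rw [Finset.mem_filter]
    refine ⟨Finset.mem_univ _, ?_⟩
    have h1 : (p.1:ℕ) ≤ mC C := Finset.le_sup (f := fun p : Idx J b => (p.1:ℕ)) hp
    have h2 := (Finset.mem_filter.1 hC).2
    have h3 : mC C = (i:ℕ) := congrArg Fin.val h2
    omega
  have hcard := Finset.card_le_card hsub
  rw [Finset.card_powerset] at hcard
  calc (((Finset.univ.erase (∅ : Finset (Idx J b))).filter (fun C => μ C = i)).card : ℝ)
      ≤ ((2^((Finset.univ.filter fun p : Idx J b => (p.1:ℕ) ≤ (i:ℕ)).card) : ℕ) : ℝ) := by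
        exact_mod_cast hcard
    _ = ((2:ℝ)^((Finset.univ.filter fun p : Idx J b => (p.1:ℕ) ≤ (i:ℕ)).card) : ℝ) := by
        push_cast
        ring

lemma transfer :
    ∑ d ∈ Dset J b, ((LstarD J b d).card : ℝ) / ∏ i : Fin J, ∏ t : Fin (b i), (d i t : ℝ)
      = ∑ f ∈ Dp J b, wt f * ((Lst f).card : ℝ) := by
  classical
  apply Finset.sum_nbij' (i := fun d => fun p : Idx J b => d p.1 p.2)
    (j := fun f => fun i t => f ⟨i, t⟩)
  · intro d hd
    rw [Dp, Fintype.mem_piFinset]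
    intro p
    rw [Dset, Fintype.mem_piFinset] at hd
    have := hd p.1
    rw [Fintype.mem_piFinset] at this
    exact this p.2
  · intro f hf
    rw [Dset, Fintype.mem_piFinset]
    intro i
    rw [Fintype.mem_piFinset]
    intro t
    rw [Dp, Fintype.mem_piFinset] at hf
    exact hf ⟨i, t⟩
  · intro d _
    rfl
  · intro f _
    funext p
    cases p
    rfl
  · intro d hd
    have hnum : (LstarD J b d).card = (Lst (fun p : Idx J b => d p.1 p.2)).card := rfl
    have hden : ∏ i : Fin J, ∏ t : Fin (b i), (d i t : ℝ)
        = ∏ p : Idx J b, ((d p.1 p.2 : ℝ)) := by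
      rw [← Finset.univ_sigma_univ, Finset.prod_sigma]
    rw [hnum, hden, div_eq_mul_inv, ← Finset.prod_inv_distrib, mul_comm]
    rfl

set_option maxHeartbeats 1000000 in
theorem lower_bound_Dsum :
    ∃ c : ℝ, 0 < c ∧ ∀ (J : ℕ), 0 < J → ∀ b : Fin J → ℕ, (∑ i, b i) = J →
      c * (2 * Real.log 2) ^ J /
          (∑ i : Fin J,
            (2 : ℝ) ^
              (((∑ j ∈ Finset.univ.filter fun j : Fin J => j ≤ i, b j : ℕ) : ℝ) -
                ((i : ℕ) + 1))) ≤
        ∑ d ∈ Dset J b,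
          ((LstarD J b d).card : ℝ) / ∏ i : Fin J, ∏ t : Fin (b i), (d i t : ℝ) := by

  classical
  refine ⟨1/6, by norm_num, ?_⟩
  intro J hJ b hb
  have hcard : Fintype.card (Idx J b) = J := by rw [card_Idx, hb]
  set Ph := ∏ p : Idx J b, Hb (p.1:ℕ) with hPh
  set t : Fin J → ℝ := fun i =>
    (2 : ℝ) ^ (((∑ j ∈ Finset.univ.filter fun j : Fin J => j ≤ i, b j : ℕ) : ℝ) -
      ((i : ℕ) + 1)) with ht
  set W := ∑ i : Fin J, t i with hW
  have h2log : (0:ℝ) < Real.log 2 := Real.log_pos (by norm_num)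
  have hlog35 : (3/5:ℝ) ≤ Real.log 2 := by
    have := Real.log_two_gt_d9; linarith
  have hPhpos : 0 < Ph := prod_Hb_pos
  have hPh_ge : Real.log 2 ^ J ≤ Ph := by
    have h1 : Real.log 2 ^ J = ∏ _p : Idx J b, Real.log 2 := by
      rw [Finset.prod_const, Finset.card_univ, hcard]
    rw [h1, hPh]
    exact Finset.prod_le_prod (fun p _ => le_of_lt h2log) (fun p _ => log_two_le_Hb _)
  have ht_pos : ∀ i : Fin J, 0 < t i := fun i => Real.rpow_pos_of_pos (by norm_num) _
  have hW1 : (1:ℝ) ≤ W := by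
    have hi0lt : J - 1 < J := by omega
    set i0 : Fin J := ⟨J-1, hi0lt⟩ with hi0
    have hfull : Finset.univ.filter (fun j : Fin J => j ≤ i0) = Finset.univ := by
      ext j
      simp only [Finset.mem_filter, Finset.mem_univ, true_and, iff_true]
      exact Fin.le_def.2 (by have := j.2; simp only [hi0]; omega)
    have hti0 : t i0 = 1 := by
      rw [ht]
      simp only [hfull, hb]
      have hv : ((i0:ℕ):ℝ) = (J:ℝ) - 1 := by
        simp only [hi0]
        push_cast [Nat.cast_sub hJ]
        ring
      rw [hv]
      rw [show (J:ℝ) - ((J:ℝ) - 1 + 1) = 0 by ring, Real.rpow_zero]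
    calc (1:ℝ) = t i0 := hti0.symm
      _ ≤ W := Finset.single_le_sum (fun i _ => le_of_lt (ht_pos i)) (Finset.mem_univ i0)
  have hWpos : (0:ℝ) < W := lt_of_lt_of_le one_pos hW1
  -- counting bound
  have term_eq : ∀ i : Fin J,
      (2:ℝ)^((Finset.univ.filter fun p : Idx J b => (p.1:ℕ) ≤ (i:ℕ)).card)
        * ((2:ℝ)^(i:ℕ))⁻¹ = 2 * t i := by
    intro i
    rw [beta_eq i]
    set n := (∑ j ∈ Finset.univ.filter fun j : Fin J => j ≤ i, b j : ℕ) with hn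
    have hti : t i = (2:ℝ) ^ (((n:ℕ):ℝ) - ((i:ℕ)+1)) := rfl
    rw [hti]
    rw [Real.rpow_sub (by norm_num)]
    rw [show ((n:ℝ)) = ((n:ℕ):ℝ) from rfl, Real.rpow_natCast]
    rw [show ((i:ℕ):ℝ) + 1 = (((i:ℕ)+1 : ℕ):ℝ) by push_cast; ring, Real.rpow_natCast]
    rw [pow_succ]
    have h2i : ((2:ℝ)^(i:ℕ)) ≠ 0 := by positivity
    field_simp
  have hcnt : ∑ C : Finset (Idx J b), ((2:ℝ)^(mC C))⁻¹ ≤ 3 * W := by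
    calc ∑ C : Finset (Idx J b), ((2:ℝ)^(mC C))⁻¹
        ≤ 1 + ∑ i : Fin J,
            (2:ℝ)^((Finset.univ.filter fun p : Idx J b => (p.1:ℕ) ≤ (i:ℕ)).card)
              * ((2:ℝ)^(i:ℕ))⁻¹ := sum_inv_mC hJ
      _ = 1 + 2 * W := by
          rw [Finset.sum_congr rfl (fun i _ => term_eq i), ← Finset.mul_sum, ← hW]
      _ ≤ 3 * W := by linarith
  -- E bound
  have hE : ∑ f ∈ Dp J b, wt f * (Rr f : ℝ) ≤ (2:ℝ)^J * Ph * (6 * W) := by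
    calc ∑ f ∈ Dp J b, wt f * (Rr f : ℝ)
        ≤ 2^(Fintype.card (Idx J b)) * (Ph + ∑ C : Finset (Idx J b),
            Ph / Real.log 2 * ((2:ℝ)^(mC C))⁻¹) := sum_over_pairs
      _ = (2:ℝ)^J * (Ph + Ph / Real.log 2 *
            ∑ C : Finset (Idx J b), ((2:ℝ)^(mC C))⁻¹) := by
          rw [hcard, ← Finset.mul_sum]
      _ ≤ (2:ℝ)^J * (Ph + Ph / Real.log 2 * (3 * W)) := by
          apply mul_le_mul_of_nonneg_left _ (by positivity)
          apply add_le_add_right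
          apply mul_le_mul_of_nonneg_left hcnt
          exact div_nonneg (le_of_lt hPhpos) (le_of_lt h2log)
      _ ≤ (2:ℝ)^J * Ph * (6 * W) := by
          have hkey : Ph + Ph / Real.log 2 * (3 * W) ≤ Ph * (6 * W) := by
            have h1 : Ph ≤ Ph * W := le_mul_of_one_le_right (le_of_lt hPhpos) hW1
            have h2 : Ph / Real.log 2 * (3 * W) ≤ Ph * (5 * W) := by
              rw [div_mul_eq_mul_div, div_le_iff₀ h2log]
              have : (3:ℝ) ≤ 5 * Real.log 2 := by linarith
              calc Ph * (3 * W) = Ph * W * 3 := by ring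
                _ ≤ Ph * W * (5 * Real.log 2) := by
                    apply mul_le_mul_of_nonneg_left this
                    positivity
                _ = Ph * (5 * W) * Real.log 2 := by ring
            calc Ph + Ph / Real.log 2 * (3 * W) ≤ Ph * W + Ph * (5 * W) := add_le_add h1 h2
              _ = Ph * (6 * W) := by ring
          calc (2:ℝ)^J * (Ph + Ph / Real.log 2 * (3 * W)) ≤ (2:ℝ)^J * (Ph * (6 * W)) := by
                apply mul_le_mul_of_nonneg_left hkey (by positivity)
            _ = (2:ℝ)^J * Ph * (6 * W) := by ring
  -- Cauchy-Schwarz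
  have hA : ∑ f ∈ Dp J b, wt f * ((2:ℝ) ^ Fintype.card (Idx J b)) = (2:ℝ)^J * Ph := by
    rw [← Finset.sum_mul, sum_wt, hcard, mul_comm, ← hPh]
  have hcs := cs_ineq (J := J) (b := b)
  rw [hA] at hcs
  set T' := ∑ f ∈ Dp J b, wt f * ((Lst f).card : ℝ) with hT'
  have hT'nonneg : 0 ≤ T' := Finset.sum_nonneg fun f _ => mul_nonneg (wt_nonneg f) (by positivity)
  have hmain : ((2:ℝ)^J * Ph)^2 ≤ T' * ((2:ℝ)^J * Ph * (6 * W)) :=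
    le_trans hcs (mul_le_mul_of_nonneg_left hE hT'nonneg)
  have hEbpos : (0:ℝ) < (2:ℝ)^J * Ph * (6 * W) := by positivity
  have hT'ge : ((2:ℝ)^J * Ph)^2 / ((2:ℝ)^J * Ph * (6 * W)) ≤ T' := by
    rw [div_le_iff₀ hEbpos]
    exact hmain
  have hsimp : ((2:ℝ)^J * Ph)^2 / ((2:ℝ)^J * Ph * (6 * W)) = (2:ℝ)^J * Ph / (6 * W) := by
    rw [sq, mul_div_mul_left _ _ (ne_of_gt (by positivity : (0:ℝ) < (2:ℝ)^J * Ph))]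
  rw [hsimp] at hT'ge
  rw [transfer]
  rw [← hT']
  calc (1/6 : ℝ) * (2 * Real.log 2) ^ J / W
      = (2:ℝ)^J * (Real.log 2)^J / (6 * W) := by
        rw [mul_pow, one_div, inv_mul_eq_div, div_div]
    _ ≤ (2:ℝ)^J * Ph / (6 * W) := by
        apply div_le_div_of_nonneg_right _ (by positivity)
        apply mul_le_mul_of_nonneg_left hPh_ge (by positivity)
    _ ≤ T' := hT'ge
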